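/- A right R-module M is noetherian if and only if every essential submodule of M is finitely generated. -/
import Mathlib

/-- Every submodule has a "complement" `C` maximal with `N ⊓ C = ⊥`; then `N ⊔ C`
is essential. -/
theorem aux_compl {R : Type*} [Ring R] {M : Type*} [AddCommGroup M] [Module R M]
    (N : Submodule R M) :
    ∃ C : Submodule R M, N ⊓ C = ⊥ ∧
      ∀ L : Submodule R M, L ≠ ⊥ → (N ⊔ C) ⊓ L ≠ ⊥ := by
  obtain ⟨C, -, hCmem, hCmax⟩ :=
    zorn_le_nonempty₀ {C : Submodule R M | N ⊓ C = ⊥}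
      (fun c hc hchain y hy => by
        refine ⟨sSup c, ?_, fun z hz => le_sSup hz⟩
        rw [Set.mem_setOf_eq, eq_bot_iff]
        rintro x ⟨hxN, hxS⟩
        obtain ⟨p, hpc, hxp⟩ :=
          (Submodule.mem_sSup_of_directed ⟨y, hy⟩ hchain.directedOn).1 hxS
        have := hc hpc
        rw [Set.mem_setOf_eq, eq_bot_iff] at this
        exact this ⟨hxN, hxp⟩)
      ⊥ (by simp)
  refine ⟨C, hCmem, fun L hL hbot => hL ?_⟩
  -- show N ⊓ (C ⊔ L) = ⊥, so by maximality C ⊔ L ≤ C, i.e. L ≤ C, i.e. L = ⊥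
  have hkey : N ⊓ (C ⊔ L) = ⊥ := by
    rw [eq_bot_iff]
    rintro x ⟨hxN, hxCL⟩
    obtain ⟨cc, hc, l, hl, rfl⟩ := Submodule.mem_sup.1 hxCL
    have hlNC : l ∈ (N ⊔ C : Submodule R M) := by
      have : l = (cc + l) - cc := by abel
      rw [this]
      exact sub_mem (Submodule.mem_sup_left hxN) (Submodule.mem_sup_right hc)
    have hl0 : l = 0 := by
      have : l ∈ (N ⊔ C) ⊓ L := ⟨hlNC, hl⟩
      rwa [hbot, Submodule.mem_bot] at this
    subst hl0
    rw [add_zero]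
    have : cc + 0 ∈ N ⊓ C := by
      constructor
      · rwa [add_zero] at hxN ⊢
      · rwa [add_zero]
    rw [hCmem, Submodule.mem_bot] at this
    simpa using this
  have hle : C ⊔ L ≤ C := hCmax hkey le_sup_left
  have hLC : L ≤ C := le_trans le_sup_right hle
  rw [eq_bot_iff]
  intro x hx
  have : x ∈ (N ⊔ C) ⊓ L := ⟨Submodule.mem_sup_right (hLC hx), hx⟩
  rwa [hbot] at this

/-- If `N ⊓ C = ⊥` and `N ⊔ C` is finitely generated, then `N` is finitely
generated. -/
theorem aux_fg {R : Type*} [Ring R] {M : Type*} [AddCommGroup M] [Module R M]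
    {N C : Submodule R M} (hdisj : N ⊓ C = ⊥) (hfg : (N ⊔ C).FG) : N.FG := by
  set P : Submodule R M := N ⊔ C with hP
  have hNP : N ≤ P := le_sup_left
  have hCP : C ≤ P := le_sup_right
  set N' : Submodule R P := N.comap P.subtype with hN'
  set C' : Submodule R P := C.comap P.subtype with hC'
  have hcompl : IsCompl C' N' := by
    constructor
    · rw [disjoint_iff, eq_bot_iff]
      rintro ⟨x, hxP⟩ ⟨hxC, hxN⟩
      have : x ∈ N ⊓ C := ⟨hxN, hxC⟩
      rw [hdisj, Submodule.mem_bot] at this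
      exact (Submodule.mem_bot R).2 (Subtype.ext this)
    · rw [codisjoint_iff, eq_top_iff]
      rintro ⟨x, hxP⟩ -
      obtain ⟨n, hn, c, hc, rfl⟩ := Submodule.mem_sup.1 hxP
      have : (⟨n + c, hxP⟩ : P) = ⟨c, hCP hc⟩ + ⟨n, hNP hn⟩ := by
        ext; simp [add_comm]
      rw [this]
      exact Submodule.add_mem_sup hc hn
  have hPfin : Module.Finite R P := Module.Finite.iff_fg.2 hfg
  have : Module.Finite R (P ⧸ C') := Module.Finite.quotient R C'
  have hN'fin : Module.Finite R N' :=
    Module.Finite.equiv (Submodule.quotientEquivOfIsCompl C' N' hcompl)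
  have hN'fg : N'.FG := Module.Finite.iff_fg.1 hN'fin
  have : N'.map P.subtype = N := by
    rw [hN', Submodule.map_comap_subtype, inf_eq_right.2 hNP]
  rw [← this]
  exact hN'fg.map _

/-- A right `R`-module `M` (modelled as a module over `Rᵐᵒᵖ`) is noetherian
iff every essential submodule of `M` is finitely generated. -/
theorem stmt3 (R : Type*) [Ring R] (M : Type*) [AddCommGroup M] [Module Rᵐᵒᵖ M] :
    IsNoetherian Rᵐᵒᵖ M ↔
      ∀ N : Submodule Rᵐᵒᵖ M,
        (∀ L : Submodule Rᵐᵒᵖ M, L ≠ ⊥ → N ⊓ L ≠ ⊥) → N.FG := by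
  constructor
  · intro h N _
    exact IsNoetherian.noetherian N
  · intro h
    refine isNoetherian_def.2 fun N => ?_
    obtain ⟨C, hdisj, hess⟩ := aux_compl N
    exact aux_fg hdisj (h (N ⊔ C) hess)
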